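/- Let D ∈ ℂ^{k×k} be a diagonal matrix with diagonal entries d_s = (1 - e^{2πiρλ_s/m}) / (ρ(1 - e^{2πiλ_s/m})), where λ_1,...,λ_k are nonzero integers in [-η/2, η/2] and η = m/ρ. Then D is invertible and the operator 2-norm of D⁻¹ satisfies ‖D⁻¹‖₂ ≤ π/2. -/

import Mathlib

open Real Complex Matrix

lemma abs_one_sub_exp_mul_I (θ : ℝ) :
    ‖(1 - Complex.exp (θ * Complex.I))‖ = 2 * |Real.sin (θ / 2)| := by
  rw [Complex.exp_mul_I]
  have h1 : (1 : ℂ) - (Complex.cos θ + Complex.sin θ * Complex.I) =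
      Complex.mk (1 - Real.cos θ) (-Real.sin θ) := by
    apply Complex.ext <;> simp [Complex.cos_ofReal_re, Complex.sin_ofReal_re]
  rw [h1]
  have h2 : ‖(Complex.mk (1 - Real.cos θ) (-Real.sin θ))‖ =
      Real.sqrt ((1 - Real.cos θ)^2 + (Real.sin θ)^2) := by
    rw [Complex.norm_def, Complex.normSq_mk]; ring_nf
  rw [h2, Real.abs_sin_half,
    show (1 - Real.cos θ)^2 + (Real.sin θ)^2 = 2^2 * ((1 - Real.cos θ)/2) by
      nlinarith [Real.sin_sq_add_cos_sq θ],
    Real.sqrt_mul (by positivity), Real.sqrt_sq (by norm_num : (0:ℝ) ≤ 2)]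

lemma aux_sin_lb {t : ℝ} (ht : |t| ≤ π / 2) : 2 / π * |t| ≤ |Real.sin t| := by
  rcases le_or_gt 0 t with h | h
  · rw [_root_.abs_of_nonneg h]
    exact (Real.mul_le_sin h (by rwa [_root_.abs_of_nonneg h] at ht)).trans (le_abs_self _)
  · rw [_root_.abs_of_neg h]
    have h2 := Real.mul_le_sin (neg_nonneg.2 h.le) (by rwa [_root_.abs_of_neg h] at ht)
    calc 2 / π * (-t) ≤ Real.sin (-t) := h2
      _ ≤ |Real.sin (-t)| := le_abs_self _
      _ = |Real.sin t| := by rw [Real.sin_neg, abs_neg]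

theorem stmt8 (k m ρ η : ℕ) (hk : 0 < k) (hρ : 0 < ρ) (hdvd : ρ ∣ m) (hη : η = m / ρ)
    (hηpos : 0 < η)
    (lam : Fin k → ℤ) (hlam : ∀ s, lam s ≠ 0) (hbd : ∀ s, |(lam s : ℝ)| ≤ (η : ℝ) / 2)
    (D : Matrix (Fin k) (Fin k) ℂ)
    (hD : D = Matrix.diagonal fun s =>
      (1 - Complex.exp (2 * π * Complex.I * ρ * lam s / m)) /
        (ρ * (1 - Complex.exp (2 * π * Complex.I * lam s / m)))) :
    IsUnit D ∧ ∀ v : EuclideanSpace ℂ (Fin k),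
      ‖Matrix.toEuclideanLin D⁻¹ v‖ ≤ π / 2 * ‖v‖ := by
  set w : Fin k → ℂ := fun s =>
      (1 - Complex.exp (2 * π * Complex.I * ρ * lam s / m)) /
        (ρ * (1 - Complex.exp (2 * π * Complex.I * lam s / m))) with hw
  have hπ : (0:ℝ) < π := Real.pi_pos
  have hm : (m : ℝ) = (ρ : ℝ) * (η : ℝ) := by
    subst hη
    rw [← Nat.cast_mul, Nat.mul_div_cancel' hdvd]
  have hρ' : (0:ℝ) < (ρ:ℝ) := by exact_mod_cast hρ
  have hη' : (0:ℝ) < (η:ℝ) := by exact_mod_cast hηpos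
  have hm' : (0:ℝ) < (m:ℝ) := by rw [hm]; positivity
  -- key lower bound on each diagonal entry
  have key : ∀ s, 2 / π ≤ ‖(w s)‖ := by
    intro s
    set x : ℝ := (lam s : ℝ) with hxdef
    have hx0 : x ≠ 0 := by simp only [hxdef]; exact_mod_cast hlam s
    have hxabs : 0 < |x| := abs_pos.2 hx0
    have hxb : |x| ≤ (η:ℝ) / 2 := hbd s
    have e1 : 2 * (π:ℂ) * Complex.I * ρ * lam s / m = ((2 * π * ρ * x / m : ℝ) : ℂ) * Complex.I := by
      simp only [hxdef]; push_cast; ring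
    have e2 : 2 * (π:ℂ) * Complex.I * lam s / m = ((2 * π * x / m : ℝ) : ℂ) * Complex.I := by
      simp only [hxdef]; push_cast; ring
    have habs : ‖(w s)‖ =
        (2 * |Real.sin (π * x / (η:ℝ))|) / ((ρ:ℝ) * (2 * |Real.sin (π * x / (m:ℝ))|)) := by
      rw [hw]
      simp only
      rw [e1, e2, norm_div, norm_mul, abs_one_sub_exp_mul_I, abs_one_sub_exp_mul_I,
        Complex.norm_natCast]
      have : 2 * π * (ρ:ℝ) * x / m / 2 = π * x / (η:ℝ) := by
        field_simp
        rw [hm]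
      rw [this, show 2 * π * x / (m:ℝ) / 2 = π * x / (m:ℝ) by ring]
    -- bounds
    have htb : |π * x / (η:ℝ)| ≤ π / 2 := by
      rw [abs_div, abs_mul, _root_.abs_of_pos hπ, _root_.abs_of_pos hη', div_le_iff₀ hη']
      calc π * |x| ≤ π * ((η:ℝ)/2) := by nlinarith
        _ = π / 2 * (η:ℝ) := by ring
    have hnum : 2 * |x| / (η:ℝ) ≤ |Real.sin (π * x / (η:ℝ))| := by
      have := aux_sin_lb htb
      rw [abs_div, abs_mul, _root_.abs_of_pos hπ, _root_.abs_of_pos hη'] at this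
      calc 2 * |x| / (η:ℝ) = 2 / π * (π * |x| / (η:ℝ)) := by field_simp
        _ ≤ _ := this
    have hden : |Real.sin (π * x / (m:ℝ))| ≤ π * |x| / (m:ℝ) := by
      have h1 : π * x / (m:ℝ) ≠ 0 := by positivity
      have := (Real.abs_sin_lt_abs h1).le
      rwa [abs_div, abs_mul, _root_.abs_of_pos hπ, _root_.abs_of_pos hm'] at this
    have hdenpos : 0 < (ρ:ℝ) * (2 * |Real.sin (π * x / (m:ℝ))|) := by
      have h1 : π * x / (m:ℝ) ≠ 0 := by positivity
      have hρ1 : (1:ℝ) ≤ (ρ:ℝ) := by exact_mod_cast hρ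
      have hηm : (η:ℝ) ≤ (m:ℝ) := by rw [hm]; nlinarith
      have hlt : |π * x / (m:ℝ)| < π := by
        rw [abs_div, abs_mul, _root_.abs_of_pos hπ, _root_.abs_of_pos hm', div_lt_iff₀ hm']
        nlinarith
      have hne : Real.sin (π * x / (m:ℝ)) ≠ 0 := fun h => h1
        ((Real.sin_eq_zero_iff_of_lt_of_lt (by linarith [(abs_lt.1 hlt).1]) (abs_lt.1 hlt).2).1 h)
      have := abs_pos.2 hne
      positivity
    rw [habs, le_div_iff₀ hdenpos]
    have hcalc : 2 / π * ((ρ:ℝ) * (2 * |Real.sin (π * x / (m:ℝ))|)) ≤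
        2 / π * ((ρ:ℝ) * (2 * (π * |x| / (m:ℝ)))) := by
      have : (0:ℝ) ≤ 2/π * (ρ:ℝ) * 2 := by positivity
      nlinarith
    calc 2 / π * ((ρ:ℝ) * (2 * |Real.sin (π * x / (m:ℝ))|))
        ≤ 2 / π * ((ρ:ℝ) * (2 * (π * |x| / (m:ℝ)))) := hcalc
      _ = 4 * |x| / (η:ℝ) := by rw [hm]; field_simp; ring
      _ = 2 * (2 * |x| / (η:ℝ)) := by ring
      _ ≤ 2 * |Real.sin (π * x / (η:ℝ))| := by linarith
  have hw0 : ∀ s, w s ≠ 0 := by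
    intro s h
    have := key s
    rw [h, norm_zero] at this
    have h2 : (0:ℝ) < 2/π := by positivity
    linarith
  have hunit : IsUnit D := by
    rw [hD]
    exact (Matrix.isUnit_diagonal).2
      ⟨⟨w, fun s => (w s)⁻¹, funext fun s => mul_inv_cancel₀ (hw0 s),
        funext fun s => inv_mul_cancel₀ (hw0 s)⟩, rfl⟩
  refine ⟨hunit, ?_⟩
  have hDinv : D⁻¹ = Matrix.diagonal (fun s => (w s)⁻¹) := by
    apply Matrix.inv_eq_right_inv
    rw [hD, Matrix.diagonal_mul_diagonal,
      show (fun s => w s * (w s)⁻¹) = fun _ => (1:ℂ) from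
        funext fun s => mul_inv_cancel₀ (hw0 s), Matrix.diagonal_one]
  intro v
  rw [hDinv]
  have happ : ∀ i, (Matrix.toEuclideanLin (Matrix.diagonal fun s => (w s)⁻¹) v) i
      = (w i)⁻¹ * v i := by
    intro i
    simp [Matrix.toEuclideanLin_apply, Matrix.mulVec_diagonal]
  rw [EuclideanSpace.norm_eq, EuclideanSpace.norm_eq]
  rw [show π / 2 * Real.sqrt (∑ i, ‖v i‖ ^ 2) = Real.sqrt ((π/2)^2 * ∑ i, ‖v i‖ ^ 2) by
    rw [Real.sqrt_mul (by positivity), Real.sqrt_sq (by positivity)]]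
  apply Real.sqrt_le_sqrt
  rw [Finset.mul_sum]
  apply Finset.sum_le_sum
  intro i _
  rw [happ i, norm_mul, mul_pow]
  have hui : ‖(w i)⁻¹‖ ≤ π / 2 := by
    rw [norm_inv]
    calc ‖w i‖⁻¹ ≤ (2/π)⁻¹ := by
          apply inv_anti₀ (by positivity)
          exact key i
      _ = π / 2 := by field_simp
  exact mul_le_mul_of_nonneg_right (pow_le_pow_left₀ (norm_nonneg _) hui 2) (by positivity)
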